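/- Let M be a real symmetric positive-definite m×m matrix, W a real symmetric m×m matrix such that 2W − M is positive definite, and A a nonzero real symmetric m×m matrix. Then trace(M⁻¹·A·M⁻¹·A·M⁻¹·(2W − M)) > 0. -/

import Mathlib

open Matrix
open scoped MatrixOrder

private lemma trace_transpose_mul_self_pos {m : ℕ} (B : Matrix (Fin m) (Fin m) ℝ)
    (hB : B ≠ 0) : 0 < (Bᵀ * B).trace := by
  have h : (Bᵀ * B).trace = ∑ i, ∑ j, B j i * B j i := by
    simp [Matrix.trace, Matrix.mul_apply, Matrix.diag]
  rw [h]
  obtain ⟨j, i, hij⟩ : ∃ j i, B j i ≠ 0 := by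
    by_contra hc
    push_neg at hc
    exact hB (by ext j i; simp [hc])
  refine Finset.sum_pos' (fun i _ => Finset.sum_nonneg fun j _ => mul_self_nonneg _)
    ⟨i, Finset.mem_univ i, ?_⟩
  exact Finset.sum_pos' (fun j _ => mul_self_nonneg _)
    ⟨j, Finset.mem_univ j, mul_self_pos.mpr hij⟩

/-- If `M` is positive definite, `W` is symmetric with
`2W − M` positive definite, and `A` is a nonzero symmetric matrix, then
`trace (M⁻¹ A M⁻¹ A M⁻¹ (2W − M)) > 0`. -/
theorem stmt4 {m : ℕ} (M W A : Matrix (Fin m) (Fin m) ℝ)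
    (hM : M.PosDef) (hW : W.IsSymm) (h2WM : ((2 : ℝ) • W - M).PosDef)
    (hA : A.IsSymm) (hA0 : A ≠ 0) :
    0 < (M⁻¹ * A * M⁻¹ * A * M⁻¹ * ((2 : ℝ) • W - M)).trace := by
  set S := (2 : ℝ) • W - M with hSdef
  set N := CFC.sqrt M with hNdef
  set R := CFC.sqrt S with hRdef
  have hNN : N * N = M := CFC.sqrt_mul_sqrt_self M hM.posSemidef.nonneg
  have hRR : R * R = S := CFC.sqrt_mul_sqrt_self S h2WM.posSemidef.nonneg
  have hNs : Nᵀ = N := by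
    have := (CFC.sqrt_nonneg M).posSemidef.isHermitian
    simpa [Matrix.IsHermitian, Matrix.conjTranspose_eq_transpose_of_trivial] using this
  have hRs : Rᵀ = R := by
    have := (CFC.sqrt_nonneg S).posSemidef.isHermitian
    simpa [Matrix.IsHermitian, Matrix.conjTranspose_eq_transpose_of_trivial] using this
  have hMdet : IsUnit M.det := isUnit_iff_ne_zero.mpr (ne_of_gt hM.det_pos)
  have hMunit : IsUnit M := (Matrix.isUnit_iff_isUnit_det M).mpr hMdet
  have hNdet : IsUnit N.det := by
    have : N.det * N.det = M.det := by rw [← Matrix.det_mul, hNN]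
    exact isUnit_of_mul_isUnit_left (this ▸ hMdet)
  have hRdet : IsUnit R.det := by
    have : R.det * R.det = S.det := by rw [← Matrix.det_mul, hRR]
    have hS : IsUnit S.det := isUnit_iff_ne_zero.mpr (ne_of_gt h2WM.det_pos)
    exact isUnit_of_mul_isUnit_left (this ▸ hS)
  have hMinv : M⁻¹ * M = 1 := Matrix.nonsing_inv_mul M hMdet
  have hMinvR : M * M⁻¹ = 1 := Matrix.mul_nonsing_inv M hMdet
  have hMsymm : Mᵀ = M := by
    simpa [Matrix.IsHermitian, Matrix.conjTranspose_eq_transpose_of_trivial] using hM.isHermitian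
  have hMinvSymm : (M⁻¹)ᵀ = M⁻¹ := by
    rw [Matrix.transpose_nonsing_inv, hMsymm]
  have hAt : Aᵀ = A := hA
  set P := M⁻¹ * A * M⁻¹ with hPdef
  have hP0 : P ≠ 0 := by
    intro hP
    have : A = M * P * M := by
      rw [hPdef, show M * (M⁻¹ * A * M⁻¹) * M = (M * M⁻¹) * A * (M⁻¹ * M) from by
        noncomm_ring, hMinvR, hMinv, Matrix.one_mul, Matrix.mul_one]
    exact hA0 (by rw [this, hP, Matrix.mul_zero, Matrix.zero_mul])
  set B := N * P * R with hBdef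
  have hB0 : B ≠ 0 := by
    intro hB
    apply hP0
    have h1 : N⁻¹ * (N * (P * R)) = 0 := by
      rw [show N * (P * R) = B from by
        rw [hBdef]; exact (Matrix.mul_assoc N P R).symm, hB,
        Matrix.mul_zero]
    rw [← Matrix.mul_assoc, Matrix.nonsing_inv_mul N hNdet, Matrix.one_mul] at h1
    have h2 : P * R * R⁻¹ = 0 := by rw [h1, Matrix.zero_mul]
    rwa [Matrix.mul_assoc, Matrix.mul_nonsing_inv R hRdet, Matrix.mul_one] at h2
  have key : Bᵀ * B = R * (M⁻¹ * A * M⁻¹ * A * M⁻¹) * R := by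
    have : Bᵀ = R * (M⁻¹ * A * M⁻¹) * N := by
      rw [hBdef, Matrix.transpose_mul, Matrix.transpose_mul, hNs, hRs, hPdef,
        Matrix.transpose_mul, Matrix.transpose_mul, hMinvSymm, hAt]
      noncomm_ring
    rw [this, hBdef, hPdef]
    calc R * (M⁻¹ * A * M⁻¹) * N * (N * (M⁻¹ * A * M⁻¹) * R)
        = R * (M⁻¹ * A * (M⁻¹ * (N * N) * M⁻¹) * A * M⁻¹) * R := by noncomm_ring
      _ = R * (M⁻¹ * A * M⁻¹ * A * M⁻¹) * R := by
          rw [hNN, Matrix.mul_assoc M⁻¹ M M⁻¹, hMinvR, Matrix.mul_one]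
  have htr : (Bᵀ * B).trace = (M⁻¹ * A * M⁻¹ * A * M⁻¹ * S).trace := by
    rw [key, Matrix.trace_mul_comm, ← Matrix.mul_assoc, hRR, Matrix.trace_mul_comm]
  rw [← htr]
  exact trace_transpose_mul_self_pos B hB0
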